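/- Let F, Ĝ: ℝⁿ → ℝ be C¹ functions on a compact convex set C with Ĝ ≥ F on C, and suppose |∇F| ≥ cβ > 0 in a neighborhood of {F = 1} ∪ {Ĝ = 1} in C, and sup_C (Ĝ − F) ≤ Ce^{−√β}. If u ∈ C with Ĝ(u) = 1 and the forward gradient flow of F starting at u stays in C and reaches a point u' with F(u') = 1, then dist(u, u') ≤ (C/c)·β^{−1}·e^{−√β}. -/

import Mathlib

theorem stmt_17 {n : ℕ} (F G : EuclideanSpace ℝ (Fin n) → ℝ)
    (C : Set (EuclideanSpace ℝ (Fin n)))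
    (c CC β : ℝ) (hc : 0 < c) (hCC : 0 < CC) (hβ : 0 < β)
    (hconv : Convex ℝ C) (hcomp : IsCompact C)
    (hF : ContDiff ℝ 1 F) (hG : ContDiff ℝ 1 G)
    (hge : ∀ u ∈ C, F u ≤ G u)
    (hsub : ∀ u ∈ C, G u - F u ≤ CC * Real.exp (-Real.sqrt β))
    (u u' : EuclideanSpace ℝ (Fin n)) (hu : u ∈ C)
    (hGu : G u = 1) (hFu' : F u' = 1)
    -- γ is the unit-speed forward gradient flow of F from u to u', staying in C
    (γ : ℝ → EuclideanSpace ℝ (Fin n)) (t : ℝ) (ht : 0 ≤ t)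
    (hγ0 : γ 0 = u) (hγt : γ t = u')
    (hin : ∀ s ∈ Set.Icc 0 t, γ s ∈ C)
    (hflow : ∀ s ∈ Set.Icc 0 t,
      HasDerivAt γ ((‖gradient F (γ s)‖)⁻¹ • gradient F (γ s)) s)
    -- the gradient lower bound near the level sets, in particular along the flow
    (hgrad : ∀ s ∈ Set.Icc 0 t, c * β ≤ ‖gradient F (γ s)‖) :
    dist u u' ≤ (CC / c) * β⁻¹ * Real.exp (-Real.sqrt β) := by
  have hcβ : 0 < c * β := mul_pos hc hβ
  -- derivative of F ∘ γ is ‖gradient F (γ s)‖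
  have hFγ : ∀ s ∈ Set.Icc 0 t, HasDerivAt (F ∘ γ) ‖gradient F (γ s)‖ s := by
    intro s hs
    have hdF : HasGradientAt F (gradient F (γ s)) (γ s) :=
      (hF.differentiable one_ne_zero (γ s)).hasGradientAt
    have := (hdF.hasFDerivAt).comp_hasDerivAt s (hflow s hs)
    have heq : (InnerProductSpace.toDual ℝ _ (gradient F (γ s)))
        ((‖gradient F (γ s)‖)⁻¹ • gradient F (γ s)) = ‖gradient F (γ s)‖ := by
      have hne : ‖gradient F (γ s)‖ ≠ 0 := by
        exact ne_of_gt (lt_of_lt_of_le hcβ (hgrad s hs))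
      rw [InnerProductSpace.toDual_apply_apply, real_inner_smul_right,
        real_inner_self_eq_norm_mul_norm, ← mul_assoc, inv_mul_cancel₀ hne, one_mul]
    rwa [heq] at this
  -- γ is 1-Lipschitz on Icc 0 t
  have hdist : ‖γ t - γ 0‖ ≤ 1 * ‖t - 0‖ := by
    apply Convex.norm_image_sub_le_of_norm_hasDerivWithin_le
      (f' := fun s => (‖gradient F (γ s)‖)⁻¹ • gradient F (γ s))
      (fun s hs => (hflow s hs).hasDerivWithinAt) _ (convex_Icc 0 t)
      ⟨le_rfl, ht⟩ ⟨ht, le_rfl⟩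
    intro s hs
    have hne : ‖gradient F (γ s)‖ ≠ 0 := ne_of_gt (lt_of_lt_of_le hcβ (hgrad s hs))
    rw [norm_smul]
    simp [abs_of_nonneg (inv_nonneg.mpr (norm_nonneg _)), inv_mul_cancel₀ hne]
  -- lower bound on growth of F ∘ γ
  have hgrow : c * β * (t - 0) ≤ (F ∘ γ) t - (F ∘ γ) 0 := by
    apply Convex.mul_sub_le_image_sub_of_le_deriv (convex_Icc 0 t)
      (fun s hs => ((hFγ s hs).continuousAt).continuousWithinAt)
      (fun s hs => ((hFγ s (interior_subset hs)).differentiableAt).differentiableWithinAt)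
      (fun s hs => by
        rw [(hFγ s (interior_subset hs)).deriv]; exact hgrad s (interior_subset hs))
      0 ⟨le_rfl, ht⟩ t ⟨ht, le_rfl⟩ ht
  have hFval : (F ∘ γ) t - (F ∘ γ) 0 = G u - F u := by
    simp [Function.comp, hγ0, hγt, hFu', hGu]
  have htle : t ≤ CC * Real.exp (-Real.sqrt β) / (c * β) := by
    rw [le_div_iff₀ hcβ]
    calc t * (c * β) = c * β * (t - 0) := by ring
    _ ≤ G u - F u := hFval ▸ hgrow
    _ ≤ CC * Real.exp (-Real.sqrt β) := hsub u hu
  have : dist u u' ≤ t := by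
    rw [dist_eq_norm, ← hγ0, ← hγt, ← norm_neg]
    simpa [abs_of_nonneg ht] using hdist
  calc dist u u' ≤ t := this
  _ ≤ CC * Real.exp (-Real.sqrt β) / (c * β) := htle
  _ = (CC / c) * β⁻¹ * Real.exp (-Real.sqrt β) := by rw [div_eq_mul_inv, mul_inv, div_eq_mul_inv]; ring
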